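/- Let Γ be a subgroup of ℤ², let e₁ = (1,0), e₂ = (0,1), let α₁, α₂, α₃ : ℤ² → ℍ∖{0} be Γ-periodic functions, and let h : Γ → ℂˣ be a group homomorphism. If ψ : ℤ² → ℍ is a holomorphic section with monodromy h, then the function x ↦ ψ(x)·j is a holomorphic section with monodromy h̄, where h̄(g) is the complex conjugate of h(g). In particular, the spectrum — the set of homomorphisms h : Γ → ℂˣ admitting a nonzero holomorphic section with monodromy h — is invariant under the involution h ↦ h̄. (This is the symmetry ρ(h) = h̄ of the spectrum of a quaternionic holomorphic line bundle over a discrete torus, stated in Section 4.1 and in Lemma 4.17.) -/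

import Mathlib

noncomputable section

/-- The quaternions. -/
abbrev H : Type := Quaternion ℝ

/-- The embedding of `ℂ` into the quaternions as the real subalgebra spanned by `1` and `i`. -/
def toH (z : ℂ) : H := ⟨z.re, z.im, 0, 0⟩

/-- The quaternion `j`. -/
def jH : H := ⟨0, 0, 1, 0⟩

/-- The lattice vector `e₁ = (1,0)`. -/
def e₁ : ℤ × ℤ := (1, 0)

/-- The lattice vector `e₂ = (0,1)`. -/
def e₂ : ℤ × ℤ := (0, 1)

/-- `ψ : ℤ² → ℍ` is a holomorphic section with monodromy `h : Γ → ℂˣ` of the quaternionic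
holomorphic line bundle over the discrete torus `ℤ²/Γ` modeled by the coefficient
functions `α₁, α₂, α₃`. -/
def IsHoloSection (Γ : AddSubgroup (ℤ × ℤ)) (α₁ α₂ α₃ : ℤ × ℤ → H)
    (h : Γ → ℂˣ) (ψ : ℤ × ℤ → H) : Prop :=
  (∀ v : ℤ × ℤ, α₁ v * ψ v + α₂ v * ψ (v + e₁) + α₃ v * ψ (v + e₂) = 0) ∧
  (∀ x : ℤ × ℤ, ∀ g : Γ, ψ (x + (g : ℤ × ℤ)) = ψ x * toH (h g))

/-- The conjugated monodromy `h̄`. -/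
def conjMonodromy {Γ : AddSubgroup (ℤ × ℤ)} (h : Γ → ℂˣ) : Γ → ℂˣ :=
  fun g => Units.map (starRingEnd ℂ).toMonoidHom (h g)

/-- The symmetry `ρ(h) = h̄` of the spectrum (Section 4.1, Lemma 4.17): if `ψ` is a
holomorphic section with monodromy `h`, then `ψ·j` is a holomorphic section with
monodromy `h̄`; in particular the spectrum is invariant under `h ↦ h̄`. -/

lemma toH_mul_jH (z : ℂ) : toH z * jH = jH * toH (starRingEnd ℂ z) := by
  ext <;> simp only [Quaternion.re_mul, Quaternion.imI_mul, Quaternion.imJ_mul, Quaternion.imK_mul] <;>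
    simp [toH, jH]

lemma jH_ne_zero : jH ≠ 0 := by
  intro h0
  have := congrArg QuaternionAlgebra.imJ h0
  exact one_ne_zero (α := ℝ) this

theorem spectrum_conjugation_symmetry
    (Γ : AddSubgroup (ℤ × ℤ))
    (α₁ α₂ α₃ : ℤ × ℤ → H)
    (hα₁ : ∀ x, α₁ x ≠ 0) (hα₂ : ∀ x, α₂ x ≠ 0) (hα₃ : ∀ x, α₃ x ≠ 0)
    (hper₁ : ∀ x : ℤ × ℤ, ∀ g : Γ, α₁ (x + (g : ℤ × ℤ)) = α₁ x)
    (hper₂ : ∀ x : ℤ × ℤ, ∀ g : Γ, α₂ (x + (g : ℤ × ℤ)) = α₂ x)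
    (hper₃ : ∀ x : ℤ × ℤ, ∀ g : Γ, α₃ (x + (g : ℤ × ℤ)) = α₃ x)
    (h : Γ → ℂˣ) (hhom : ∀ a b : Γ, h (a + b) = h a * h b) :
    (∀ ψ : ℤ × ℤ → H, IsHoloSection Γ α₁ α₂ α₃ h ψ →
      IsHoloSection Γ α₁ α₂ α₃ (conjMonodromy h) (fun x => ψ x * jH)) ∧
    ((∃ ψ : ℤ × ℤ → H, ψ ≠ 0 ∧ IsHoloSection Γ α₁ α₂ α₃ h ψ) →
      (∃ ψ : ℤ × ℤ → H, ψ ≠ 0 ∧ IsHoloSection Γ α₁ α₂ α₃ (conjMonodromy h) ψ)) := by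
  have key : ∀ ψ : ℤ × ℤ → H, IsHoloSection Γ α₁ α₂ α₃ h ψ →
      IsHoloSection Γ α₁ α₂ α₃ (conjMonodromy h) (fun x => ψ x * jH) := by
    rintro ψ ⟨heq, hmon⟩
    constructor
    · intro v
      have := heq v
      calc α₁ v * (ψ v * jH) + α₂ v * (ψ (v + e₁) * jH) + α₃ v * (ψ (v + e₂) * jH)
          = (α₁ v * ψ v + α₂ v * ψ (v + e₁) + α₃ v * ψ (v + e₂)) * jH := by noncomm_ring
        _ = 0 := by rw [this, zero_mul]
    · intro x g
      show ψ (x + (g : ℤ × ℤ)) * jH = ψ x * jH * toH (conjMonodromy h g)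
      rw [hmon x g, mul_assoc, mul_assoc]
      congr 1
      rw [conjMonodromy]
      exact (toH_mul_jH (h g)).trans rfl
  refine ⟨key, ?_⟩
  rintro ⟨ψ, hψ, hsec⟩
  refine ⟨fun x => ψ x * jH, ?_, key ψ hsec⟩
  intro hcontra
  apply hψ
  funext x
  have := congrFun hcontra x
  simp only [Pi.zero_apply] at this ⊢
  rcases mul_eq_zero.mp this with h1 | h1
  · exact h1
  · exact absurd h1 jH_ne_zero
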